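/- Let Û, U ∈ R^{n×d} have orthonormal columns, and let W* = arg min_{W ∈ O(d)} ‖Û − UW‖_F. Writing U^T Û = Q_1 D Q_2^T for its singular value decomposition with singular values D_{kk} ∈ [0,1], one has W* = Q_1 Q_2^T and ‖U^T Û − W*‖_F ≤ Σ_{k=1}^d (1 − D_{kk}^2) = ‖sin Θ(Û, U)‖_F^2. -/
import Mathlib


open Matrix

/-- Frobenius norm of a real matrix. -/
noncomputable def frob {m n : Type*} [Fintype m] [Fintype n] (M : Matrix m n ℝ) : ℝ :=
  Real.sqrt (∑ i, ∑ j, (M i j) ^ 2)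

lemma frob_sq_trace {m n : ℕ} (M : Matrix (Fin m) (Fin n) ℝ) :
    ∑ i, ∑ j, (M i j) ^ 2 = (Mᵀ * M).trace := by
  simp only [Matrix.trace, Matrix.diag, Matrix.mul_apply, Matrix.transpose_apply, sq]
  rw [Finset.sum_comm]

lemma diag_le_one {d : ℕ} (M : Matrix (Fin d) (Fin d) ℝ) (hM : Mᵀ * M = 1) (k : Fin d) :
    M k k ≤ 1 := by
  have h1 : (Mᵀ * M) k k = 1 := by rw [hM]; simp
  have h2 : ∑ i, (M i k) ^ 2 = 1 := by
    rw [← h1]; simp [Matrix.mul_apply, sq]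
  have h3 : (M k k) ^ 2 ≤ 1 := by
    rw [← h2]
    exact Finset.single_le_sum (fun i _ => sq_nonneg (M i k)) (Finset.mem_univ k)
  nlinarith [sq_nonneg (M k k - 1)]

theorem stmt10 {n d : ℕ}
    (U Uh : Matrix (Fin n) (Fin d) ℝ) (hU : Uᵀ * U = 1) (hUh : Uhᵀ * Uh = 1)
    (Q1 Q2 : Matrix (Fin d) (Fin d) ℝ) (hQ1 : Q1ᵀ * Q1 = 1) (hQ2 : Q2ᵀ * Q2 = 1)
    (D : Fin d → ℝ) (hD : ∀ k, D k ∈ Set.Icc (0 : ℝ) 1)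
    (hsvd : Uᵀ * Uh = Q1 * Matrix.diagonal D * Q2ᵀ) :
    (∀ W : Matrix (Fin d) (Fin d) ℝ, Wᵀ * W = 1 →
        frob (Uh - U * (Q1 * Q2ᵀ)) ≤ frob (Uh - U * W)) ∧
    frob (Uᵀ * Uh - Q1 * Q2ᵀ) ≤ ∑ k, (1 - D k ^ 2) := by
  have hQ2' : Q2 * Q2ᵀ = 1 := mul_eq_one_comm.mp hQ2
  have hQ1' : Q1 * Q1ᵀ = 1 := mul_eq_one_comm.mp hQ1
  -- key expansion of the squared Frobenius norm
  have key : ∀ W : Matrix (Fin d) (Fin d) ℝ, Wᵀ * W = 1 →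
      ((Uh - U * W)ᵀ * (Uh - U * W)).trace
        = 2 * (d : ℝ) - 2 * (Wᵀ * (Uᵀ * Uh)).trace := by
    intro W hW
    have e1 : (U * W)ᵀ * (U * W) = (1 : Matrix (Fin d) (Fin d) ℝ) := by
      rw [Matrix.transpose_mul]
      calc Wᵀ * Uᵀ * (U * W) = Wᵀ * (Uᵀ * U) * W := by
            simp only [Matrix.mul_assoc]
        _ = 1 := by rw [hU, Matrix.mul_one, hW]
    have e2 : (U * W)ᵀ * Uh = Wᵀ * (Uᵀ * Uh) := by
      rw [Matrix.transpose_mul, Matrix.mul_assoc]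
    have e3 : (Uhᵀ * (U * W)).trace = (Wᵀ * (Uᵀ * Uh)).trace := by
      rw [← e2, ← Matrix.trace_transpose ((U * W)ᵀ * Uh), Matrix.transpose_mul,
        Matrix.transpose_transpose]
    have expand : (Uh - U * W)ᵀ * (Uh - U * W)
        = Uhᵀ * Uh - Uhᵀ * (U * W) - ((U * W)ᵀ * Uh - (U * W)ᵀ * (U * W)) := by
      rw [Matrix.transpose_sub, Matrix.sub_mul, Matrix.mul_sub, Matrix.mul_sub]
    rw [expand, hUh, e1, e2]
    simp only [Matrix.trace_sub, e3]
    have : (1 : Matrix (Fin d) (Fin d) ℝ).trace = (d : ℝ) := by simp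
    rw [this]
    have e2' : (Wᵀ * (Uᵀ * Uh)).trace = (Wᵀ * (Uᵀ * Uh)).trace := rfl
    ring
  -- the trace functional is maximized at Q1 Q2ᵀ
  have trace_le : ∀ W : Matrix (Fin d) (Fin d) ℝ, Wᵀ * W = 1 →
      (Wᵀ * (Uᵀ * Uh)).trace ≤ ∑ k, D k := by
    intro W hW
    have hW' : W * Wᵀ = 1 := mul_eq_one_comm.mp hW
    set M : Matrix (Fin d) (Fin d) ℝ := Q2ᵀ * (Wᵀ * Q1) with hMdef
    have hM : Mᵀ * M = 1 := by
      simp only [hMdef, Matrix.transpose_mul, Matrix.transpose_transpose, Matrix.mul_assoc]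
      rw [← Matrix.mul_assoc Q2 Q2ᵀ, hQ2', Matrix.one_mul, ← Matrix.mul_assoc W Wᵀ, hW',
        Matrix.one_mul, hQ1]
    have htr : (Wᵀ * (Uᵀ * Uh)).trace = ∑ k, M k k * D k := by
      rw [hsvd]
      have : Wᵀ * (Q1 * Matrix.diagonal D * Q2ᵀ)
          = (Wᵀ * Q1 * Matrix.diagonal D) * Q2ᵀ := by simp only [Matrix.mul_assoc]
      rw [this, Matrix.trace_mul_comm]
      have : Q2ᵀ * (Wᵀ * Q1 * Matrix.diagonal D) = M * Matrix.diagonal D := by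
        rw [hMdef]; simp only [Matrix.mul_assoc]
      rw [this]
      simp [Matrix.trace, Matrix.diag, Matrix.mul_diagonal]
    rw [htr]
    apply Finset.sum_le_sum
    intro k _
    have hDk := hD k
    have hMk := diag_le_one M hM k
    have : M k k * D k ≤ 1 * D k :=
      mul_le_mul_of_nonneg_right hMk hDk.1
    simpa using this
  have trace_eq : ((Q1 * Q2ᵀ)ᵀ * (Uᵀ * Uh)).trace = ∑ k, D k := by
    rw [hsvd, Matrix.transpose_mul, Matrix.transpose_transpose]
    have : Q2 * Q1ᵀ * (Q1 * Matrix.diagonal D * Q2ᵀ)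
        = Q2 * ((Q1ᵀ * Q1) * (Matrix.diagonal D * Q2ᵀ)) := by simp only [Matrix.mul_assoc]
    rw [this, hQ1, Matrix.one_mul, Matrix.trace_mul_comm, Matrix.mul_assoc, hQ2,
      Matrix.mul_one]
    simp [Matrix.trace, Matrix.diag]
  constructor
  · intro W hW
    have hQQ : (Q1 * Q2ᵀ)ᵀ * (Q1 * Q2ᵀ) = 1 := by
      rw [Matrix.transpose_mul, Matrix.transpose_transpose]
      calc Q2 * Q1ᵀ * (Q1 * Q2ᵀ) = Q2 * ((Q1ᵀ * Q1) * Q2ᵀ) := by simp only [Matrix.mul_assoc]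
        _ = 1 := by rw [hQ1, Matrix.one_mul, hQ2']
    unfold frob
    apply Real.sqrt_le_sqrt
    rw [frob_sq_trace, frob_sq_trace, key _ hQQ, key _ hW, trace_eq]
    have := trace_le W hW
    linarith
  · -- second part
    have hB : Uᵀ * Uh - Q1 * Q2ᵀ = Q1 * Matrix.diagonal (fun k => D k - 1) * Q2ᵀ := by
      rw [hsvd]
      have : Matrix.diagonal (fun k => D k - 1) = Matrix.diagonal D - 1 := by
        rw [← Matrix.diagonal_one, Matrix.diagonal_sub]
      rw [this]
      noncomm_ring
    have hBsq : ∑ i, ∑ j, ((Uᵀ * Uh - Q1 * Q2ᵀ) i j) ^ 2 = ∑ k, (D k - 1) ^ 2 := by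
      rw [frob_sq_trace, hB]
      set E : Fin d → ℝ := fun k => D k - 1 with hE
      have hmat : (Q1 * Matrix.diagonal E * Q2ᵀ)ᵀ * (Q1 * Matrix.diagonal E * Q2ᵀ)
          = Q2 * (Matrix.diagonal (fun k => E k * E k) * Q2ᵀ) := by
        simp only [Matrix.transpose_mul, Matrix.transpose_transpose,
          Matrix.diagonal_transpose, Matrix.mul_assoc]
        rw [← Matrix.mul_assoc Q1ᵀ Q1, hQ1, Matrix.one_mul,
          ← Matrix.mul_assoc (Matrix.diagonal E) (Matrix.diagonal E),
          Matrix.diagonal_mul_diagonal]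
      rw [hmat, Matrix.trace_mul_comm, Matrix.mul_assoc, hQ2, Matrix.mul_one]
      simp [Matrix.trace, Matrix.diag, sq, hE]
    unfold frob
    rw [hBsq]
    have h1 : ∑ k, (D k - 1) ^ 2 ≤ (∑ k, (1 - D k)) ^ 2 := by
      have hnn : ∀ k ∈ Finset.univ, (0:ℝ) ≤ 1 - D k := fun k _ => by
        have := (hD k).2; linarith
      calc ∑ k, (D k - 1) ^ 2 = ∑ k, (1 - D k) * (1 - D k) := by
            apply Finset.sum_congr rfl; intro k _; ring
        _ ≤ ∑ k, (1 - D k) * (∑ j, (1 - D j)) := by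
            apply Finset.sum_le_sum
            intro k hk
            apply mul_le_mul_of_nonneg_left _ (hnn k hk)
            exact Finset.single_le_sum hnn (Finset.mem_univ k)
        _ = (∑ k, (1 - D k)) ^ 2 := by rw [← Finset.sum_mul]; ring
    have h2 : ∑ k, (1 - D k) ≤ ∑ k, (1 - D k ^ 2) := by
      apply Finset.sum_le_sum
      intro k _
      have h := hD k
      nlinarith [h.1, h.2]
    have h3 : (0:ℝ) ≤ ∑ k, (1 - D k) := Finset.sum_nonneg fun k _ => by
      have := (hD k).2; linarith
    calc Real.sqrt (∑ k, (D k - 1) ^ 2) ≤ Real.sqrt ((∑ k, (1 - D k)) ^ 2) :=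
          Real.sqrt_le_sqrt h1
      _ = ∑ k, (1 - D k) := by rw [Real.sqrt_sq h3]
      _ ≤ ∑ k, (1 - D k ^ 2) := h2
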